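/- Let K have characteristic zero, equip K^{2n} with the symmetric bilinear form given by S = [[0,I_n],[I_n,0]]. Define x_1 = [[√x·D, 0],[0, -√x·D]] with D = diag(1,...,n), and x_2 = [[√x·A, y·Z],[y²·Z, -√x·A]] where A = (a_{ij}) with a_{ij} = 1 if i=1 or j=1 and 0 otherwise, and Z = (z_{ij}) with z_{1j} = 1 for j≠1, z_{i1} = -1 for i≠1, z_{ij} = 0 otherwise. Then for every standard basis vector e_i of K^{2n} (each being an eigenvector of x_1), one has B(x_2(e_i), x_2(e_i)) ≠ 0, where B(v,w) = vᵀSw (assuming x, y nonzero). -/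

import Mathlib

open Matrix

noncomputable section

/-- The standard hyperbolic symmetric form matrix `S = [[0, I_n],[I_n, 0]]`. -/
def Smat (K : Type*) [Field K] (n : ℕ) : Matrix (Fin n ⊕ Fin n) (Fin n ⊕ Fin n) K :=
  fromBlocks 0 1 1 0

/-- The symmetric form `B(v, w) = vᵀ S w` on `K^{2n}`. -/
def symForm (K : Type*) [Field K] (n : ℕ) (v w : Fin n ⊕ Fin n → K) : K :=
  v ⬝ᵥ (Smat K n).mulVec w

/-- `D = diag(1, 2, …, n)`. -/
def Dmat' (K : Type*) [Field K] (n : ℕ) : Matrix (Fin n) (Fin n) K :=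
  diagonal fun i => ((i : ℕ) + 1 : K)

/-- The matrix `A` with `a_{ij} = 1` if `i = 1` or `j = 1`, and `0` otherwise. -/
def Aso (K : Type*) [Field K] (n : ℕ) : Matrix (Fin n) (Fin n) K :=
  Matrix.of fun i j => if (i : ℕ) = 0 ∨ (j : ℕ) = 0 then (1 : K) else 0

/-- The matrix `Z` with `z_{1j} = 1` for `j ≠ 1`, `z_{i1} = -1` for `i ≠ 1`,
and `0` otherwise. -/
def Zso (K : Type*) [Field K] (n : ℕ) : Matrix (Fin n) (Fin n) K :=
  Matrix.of fun i j =>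
    if (i : ℕ) = 0 ∧ (j : ℕ) ≠ 0 then (1 : K) else if (j : ℕ) = 0 ∧ (i : ℕ) ≠ 0 then -1 else 0

/-- `x₁ = [[√x·D, 0], [0, -√x·D]]`. -/
def xOne (K : Type*) [Field K] (n : ℕ) (s : K) :
    Matrix (Fin n ⊕ Fin n) (Fin n ⊕ Fin n) K :=
  fromBlocks (s • Dmat' K n) 0 0 (-(s • Dmat' K n))

/-- `x₂ = [[√x·A, y·Z], [y²·Z, -√x·A]]`. -/
def xTwo (K : Type*) [Field K] (n : ℕ) (s y : K) :
    Matrix (Fin n ⊕ Fin n) (Fin n ⊕ Fin n) K :=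
  fromBlocks (s • Aso K n) (y • Zso K n) ((y ^ 2) • Zso K n) (-(s • Aso K n))


lemma symForm_eq (K : Type*) [Field K] (n : ℕ) (v : Fin n ⊕ Fin n → K) :
    symForm K n v v = 2 * ∑ j, v (Sum.inl j) * v (Sum.inr j) := by
  simp [symForm, Smat, dotProduct, mulVec, Fintype.sum_sum_type, fromBlocks,
    Matrix.one_apply, mul_comm]
  ring

lemma key (K : Type*) [Field K] (n : ℕ) (hn : 2 ≤ n) (k : Fin n) :
    ∑ j, Aso K n j k * Zso K n j k = if (k : ℕ) = 0 then 1 - (n : K) else 1 := by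
  haveI : NeZero n := ⟨by omega⟩
  by_cases hk : (k : ℕ) = 0
  · have : ∀ j : Fin n, Aso K n j k * Zso K n j k = (if j = 0 then 1 else 0) - 1 := by
      intro j
      by_cases hj : (j : ℕ) = 0 <;>
        simp [Aso, Zso, hk, hj, ← Fin.val_eq_zero_iff]
    simp [this, Finset.sum_sub_distrib, hk]
  · have : ∀ j : Fin n, Aso K n j k * Zso K n j k = (if j = 0 then 1 else 0) := by
      intro j
      by_cases hj : (j : ℕ) = 0 <;>
        simp [Aso, Zso, hk, hj, ← Fin.val_eq_zero_iff]
    simp [this, hk]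

/-- for every standard basis vector `e_i` of `K^{2n}` (each an
eigenvector of `x₁`), `B(x₂ e_i, x₂ e_i) ≠ 0`. -/
theorem stmt11 (K : Type*) [Field K] [CharZero K] (n : ℕ) (hn : 2 ≤ n)
    (s y : K) (hs : s ≠ 0) (hy : y ≠ 0) (i : Fin n ⊕ Fin n) :
    symForm K n ((xTwo K n s y).mulVec (Pi.single i 1))
      ((xTwo K n s y).mulVec (Pi.single i 1)) ≠ 0 := by
  have hv : ∀ j, (xTwo K n s y).mulVec (Pi.single i 1) j = xTwo K n s y j i := by
    intro j; simp [mulVec_single]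
  rw [symForm_eq]
  simp only [hv]
  have h1n : (1 : K) - (n : K) ≠ 0 := by
    have h : ((1 : ℕ) : K) ≠ (n : K) := by exact_mod_cast (by omega : (1 : ℕ) ≠ n)
    simpa [sub_eq_zero] using h
  obtain k | k := i
  · have : ∑ j, xTwo K n s y (Sum.inl j) (Sum.inl k) * xTwo K n s y (Sum.inr j) (Sum.inl k)
        = s * y ^ 2 * ∑ j, Aso K n j k * Zso K n j k := by
      rw [Finset.mul_sum]
      refine Finset.sum_congr rfl fun j _ => ?_
      simp [xTwo]; ring
    rw [this, key K n hn k]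
    by_cases hk : (k : ℕ) = 0 <;> simp [hk, hs, hy, h1n, sub_eq_zero]
  · have : ∑ j, xTwo K n s y (Sum.inl j) (Sum.inr k) * xTwo K n s y (Sum.inr j) (Sum.inr k)
        = -(s * y) * ∑ j, Aso K n j k * Zso K n j k := by
      rw [Finset.mul_sum]
      refine Finset.sum_congr rfl fun j _ => ?_
      simp [xTwo]; ring
    rw [this, key K n hn k]
    by_cases hk : (k : ℕ) = 0 <;> simp [hk, hs, hy, h1n, sub_eq_zero]
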